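/- One has ∫₀^{X} u(x)² / cosh²(x) dx ≤ (2 / cosh(X/2)) · ∫₀^{X} u(x)² dx. -/

import Mathlib

set_option maxHeartbeats 1000000

lemma nonneg_of_hasDerivWithinAt_nonneg (a c : ℝ) (f f' : ℝ → ℝ)
    (hf : ∀ z ∈ Set.Icc a c, HasDerivWithinAt f (f' z) (Set.Icc a c) z)
    (hd : ∀ z ∈ Set.Icc a c, 0 ≤ f' z) (h0 : 0 ≤ f a) :
    ∀ z ∈ Set.Icc a c, 0 ≤ f z := by
  intro z hz
  have hac : a ≤ c := le_trans hz.1 hz.2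
  have mono : MonotoneOn f (Set.Icc a c) := by
    apply monotoneOn_of_deriv_nonneg (convex_Icc a c)
      (fun t ht => (hf t ht).continuousWithinAt)
    · intro t ht
      rw [interior_Icc] at ht
      exact ((hf t (Set.Ioo_subset_Icc_self ht)).hasDerivAt
        (Icc_mem_nhds ht.1 ht.2)).differentiableAt.differentiableWithinAt
    · intro t ht
      rw [interior_Icc] at ht
      rw [((hf t (Set.Ioo_subset_Icc_self ht)).hasDerivAt (Icc_mem_nhds ht.1 ht.2)).deriv]
      exact hd t (Set.Ioo_subset_Icc_self ht)
  exact h0.trans (mono (Set.left_mem_Icc.2 hac) hz hz.1)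

/-- For a radial Mathieu function `u` with `−u'' + (b − h² cosh²)u = 0` on `[0,X]`,
`b − h² cosh²(X) ≥ 1/2`, and Dirichlet or Neumann condition at `0`:
`∫₀^X u²/cosh² ≤ (2/cosh(X/2)) ∫₀^X u²`. -/
theorem mathieu_cosh_weight_estimate
    (X : ℝ) (hX : 0 < X) (h b : ℝ)
    (u u' u'' : ℝ → ℝ)
    (hu' : ∀ x ∈ Set.Icc (0:ℝ) X, HasDerivWithinAt u (u' x) (Set.Icc 0 X) x)
    (hu'' : ∀ x ∈ Set.Icc (0:ℝ) X, HasDerivWithinAt u' (u'' x) (Set.Icc 0 X) x)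
    (hu''cont : ContinuousOn u'' (Set.Icc 0 X))
    (hode : ∀ x ∈ Set.Icc (0:ℝ) X,
      -u'' x + (b - h ^ 2 * Real.cosh x ^ 2) * u x = 0)
    (hgap : b - h ^ 2 * Real.cosh X ^ 2 ≥ 1/2)
    (hbc : u 0 = 0 ∨ u' 0 = 0) :
    (∫ x in (0:ℝ)..X, u x ^ 2 / Real.cosh x ^ 2)
      ≤ (2 / Real.cosh (X/2)) * ∫ x in (0:ℝ)..X, u x ^ 2 := by
  set I := Set.Icc (0:ℝ) X with hI
  -- the potential is ≥ 1/2 on I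
  have hq : ∀ x ∈ I, 1/2 ≤ b - h ^ 2 * Real.cosh x ^ 2 := by
    intro x hx
    have h1 : Real.cosh x ≤ Real.cosh X := by
      rw [Real.cosh_le_cosh]
      rw [abs_of_nonneg hx.1, abs_of_nonneg (le_of_lt hX)]
      exact hx.2
    have h2 : Real.cosh x ^ 2 ≤ Real.cosh X ^ 2 := by
      apply pow_le_pow_left₀ (Real.cosh_pos x).le h1
    nlinarith [sq_nonneg h]
  have hodes : ∀ x ∈ I, u'' x = (b - h ^ 2 * Real.cosh x ^ 2) * u x := by
    intro x hx; have := hode x hx; linarith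
  -- E = u u' is nonneg on I
  have hE : ∀ x ∈ I, HasDerivWithinAt (fun t => u t * u' t)
      (u' x * u' x + u x * u'' x) I x := fun x hx => (hu' x hx).mul (hu'' x hx)
  have hEnn : ∀ x ∈ I, 0 ≤ u x * u' x := by
    apply nonneg_of_hasDerivWithinAt_nonneg 0 X _ (fun x => u' x * u' x + u x * u'' x) hE
    · intro z hz
      rw [hodes z hz]
      have := hq z hz
      nlinarith [sq_nonneg (u' z), sq_nonneg (u z)]
    · rcases hbc with h0 | h0 <;> rw [h0] <;> simp
  -- derivative of w = u^2
  have hw : ∀ x ∈ I, HasDerivWithinAt (fun t => u t ^ 2) (2 * u x * u' x) I x := by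
    intro x hx
    have := (hu' x hx).fun_pow 2
    simpa using this
  -- w'' - w ≥ 0
  have hwpp : ∀ x ∈ I, 0 ≤ 2 * u' x ^ 2 + 2 * u x * u'' x - u x ^ 2 := by
    intro x hx
    rw [hodes x hx]
    have := hq x hx
    nlinarith [sq_nonneg (u' x), sq_nonneg (u x)]
  -- key growth estimate : w y ≥ w x cosh (y - x)
  have key : ∀ x ∈ I, ∀ y ∈ I, x ≤ y → u x ^ 2 * Real.cosh (y - x) ≤ u y ^ 2 := by
    intro x hx y hy hxy
    set J := Set.Icc x X with hJ
    have hJI : J ⊆ I := Set.Icc_subset_Icc hx.1 le_rfl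
    have hyJ : y ∈ J := ⟨hxy, hy.2⟩
    have hxJ : x ∈ J := ⟨le_rfl, hx.2⟩
    -- A z = f' z + f z where f z = w z - w x cosh (z - x)
    set A : ℝ → ℝ := fun z =>
      2 * (u z * u' z) - u x ^ 2 * Real.sinh (z - x)
        + (u z ^ 2 - u x ^ 2 * Real.cosh (z - x)) with hA
    have hAderiv : ∀ z ∈ J, HasDerivWithinAt A
        (2 * u' z ^ 2 + 2 * u z * u'' z - u x ^ 2 * Real.cosh (z - x)
          + (2 * (u z * u' z) - u x ^ 2 * Real.sinh (z - x))) J z := by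
      intro z hz
      have hzI : z ∈ I := hJI hz
      have d1 : HasDerivWithinAt (fun t => 2 * (u t * u' t))
          (2 * (u' z * u' z + u z * u'' z)) J z :=
        ((hE z hzI).mono hJI).const_mul 2
      have dsinh : HasDerivWithinAt (fun t => Real.sinh (t - x)) (Real.cosh (z - x)) J z := by
        have := ((hasDerivAt_id z).sub_const x).sinh
        simpa using this.hasDerivWithinAt
      have dcosh : HasDerivWithinAt (fun t => Real.cosh (t - x)) (Real.sinh (z - x)) J z := by
        have := ((hasDerivAt_id z).sub_const x).cosh
        simpa using this.hasDerivWithinAt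
      have d2 := dsinh.const_mul (u x ^ 2)
      have d3 := (hw z hzI).mono hJI
      have d4 := dcosh.const_mul (u x ^ 2)
      have hres := (d1.sub d2).add (d3.sub d4)
      have heq : 2 * u' z ^ 2 + 2 * u z * u'' z - u x ^ 2 * Real.cosh (z - x)
          + (2 * (u z * u' z) - u x ^ 2 * Real.sinh (z - x))
          = 2 * (u' z * u' z + u z * u'' z) - u x ^ 2 * Real.cosh (z - x)
          + (2 * u z * u' z - u x ^ 2 * Real.sinh (z - x)) := by ring
      rw [heq]
      exact hres
    -- F = A * exp(-z) is nonneg on J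
    set F : ℝ → ℝ := fun z => A z * Real.exp (-z) with hF
    have hFderiv : ∀ z ∈ J, HasDerivWithinAt F
        ((2 * u' z ^ 2 + 2 * u z * u'' z - u z ^ 2) * Real.exp (-z)) J z := by
      intro z hz
      have dexp : HasDerivWithinAt (fun t => Real.exp (-t)) (Real.exp (-z) * (-1)) J z := by
        have := ((hasDerivAt_id z).neg).exp
        simpa using this.hasDerivWithinAt
      have hres := (hAderiv z hz).mul dexp
      have heq : (2 * u' z ^ 2 + 2 * u z * u'' z - u z ^ 2) * Real.exp (-z)
          = (2 * u' z ^ 2 + 2 * u z * u'' z - u x ^ 2 * Real.cosh (z - x)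
            + (2 * (u z * u' z) - u x ^ 2 * Real.sinh (z - x))) * Real.exp (-z)
          + A z * (Real.exp (-z) * -1) := by
        simp only [hA]; ring
      rw [heq]
      exact hres
    have hFnn : ∀ z ∈ J, 0 ≤ F z := by
      apply nonneg_of_hasDerivWithinAt_nonneg x X F _ hFderiv
      · intro z hz
        exact mul_nonneg (hwpp z (hJI hz)) (Real.exp_pos _).le
      · simp only [hF, hA]
        simp only [sub_self, Real.sinh_zero, Real.cosh_zero]
        have := hEnn x hx
        have := (Real.exp_pos (-x)).le
        nlinarith
    have hAnn : ∀ z ∈ J, 0 ≤ A z := by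
      intro z hz
      have hfe : 0 ≤ A z * Real.exp (-z) := hFnn z hz
      have he := Real.exp_pos (-z)
      nlinarith [hfe, he]
    -- G = f * exp z
    set G : ℝ → ℝ := fun z => (u z ^ 2 - u x ^ 2 * Real.cosh (z - x)) * Real.exp z with hG
    have hGderiv : ∀ z ∈ J, HasDerivWithinAt G (A z * Real.exp z) J z := by
      intro z hz
      have hzI : z ∈ I := hJI hz
      have dcosh : HasDerivWithinAt (fun t => Real.cosh (t - x)) (Real.sinh (z - x)) J z := by
        have := ((hasDerivAt_id z).sub_const x).cosh
        simpa using this.hasDerivWithinAt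
      have dexp : HasDerivWithinAt (fun t : ℝ => Real.exp t) (Real.exp z) J z :=
        (Real.hasDerivAt_exp z).hasDerivWithinAt
      have hres := (((hw z hzI).mono hJI).sub (dcosh.const_mul (u x ^ 2))).mul dexp
      have heq : A z * Real.exp z
          = (2 * u z * u' z - u x ^ 2 * Real.sinh (z - x)) * Real.exp z
            + (u z ^ 2 - u x ^ 2 * Real.cosh (z - x)) * Real.exp z := by
        simp only [hA]; ring
      rw [heq]
      exact hres
    have hGnn : ∀ z ∈ J, 0 ≤ G z := by
      apply nonneg_of_hasDerivWithinAt_nonneg x X G _ hGderiv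
      · intro z hz
        exact mul_nonneg (hAnn z hz) (Real.exp_pos _).le
      · simp [hG]
    have := hGnn y hyJ
    simp only [hG] at this
    nlinarith [Real.exp_pos y]
  -- now the integral estimates
  set c := Real.cosh (X/2) with hc
  have hc1 : 1 ≤ c := Real.one_le_cosh _
  have hcpos : 0 < c := lt_of_lt_of_le one_pos hc1
  have hucont : ContinuousOn u I := fun z hz => (hu' z hz).continuousWithinAt
  have hXhalf : (0:ℝ) ≤ X/2 := by linarith
  have hXhalf2 : X/2 ≤ X := by linarith
  -- integrability
  have hcoshne : ∀ x : ℝ, Real.cosh x ^ 2 ≠ 0 := fun x => by positivity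
  have contq : ContinuousOn (fun x => u x ^ 2 / Real.cosh x ^ 2) I :=
    (hucont.pow 2).div ((Real.continuous_cosh.continuousOn).pow 2) (fun x _ => hcoshne x)
  have contw : ContinuousOn (fun x => u x ^ 2) I := hucont.pow 2
  have i1 : IntervalIntegrable (fun x => u x ^ 2 / Real.cosh x ^ 2) MeasureTheory.volume 0 (X/2) :=
    (contq.mono (Set.Icc_subset_Icc le_rfl hXhalf2)).intervalIntegrable_of_Icc hXhalf
  have i2 : IntervalIntegrable (fun x => u x ^ 2 / Real.cosh x ^ 2) MeasureTheory.volume (X/2) X :=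
    (contq.mono (Set.Icc_subset_Icc hXhalf le_rfl)).intervalIntegrable_of_Icc hXhalf2
  have j1 : IntervalIntegrable (fun x => u x ^ 2) MeasureTheory.volume 0 (X/2) :=
    (contw.mono (Set.Icc_subset_Icc le_rfl hXhalf2)).intervalIntegrable_of_Icc hXhalf
  have j2 : IntervalIntegrable (fun x => u x ^ 2) MeasureTheory.volume (X/2) X :=
    (contw.mono (Set.Icc_subset_Icc hXhalf le_rfl)).intervalIntegrable_of_Icc hXhalf2
  have jsh : IntervalIntegrable (fun x => u (x + X/2) ^ 2 / c) MeasureTheory.volume 0 (X/2) := by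
    apply ContinuousOn.intervalIntegrable_of_Icc hXhalf
    apply ContinuousOn.div_const
    apply ContinuousOn.pow
    apply ContinuousOn.comp hucont (Continuous.continuousOn (by continuity))
    intro x hx
    exact ⟨by linarith [hx.1], by linarith [hx.2]⟩
  -- part 1: on [0, X/2]
  have part1 : (∫ x in (0:ℝ)..(X/2), u x ^ 2 / Real.cosh x ^ 2)
      ≤ (∫ x in (X/2)..X, u x ^ 2) / c := by
    have step : (∫ x in (0:ℝ)..(X/2), u x ^ 2 / Real.cosh x ^ 2)
        ≤ ∫ x in (0:ℝ)..(X/2), u (x + X/2) ^ 2 / c := by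
      apply intervalIntegral.integral_mono_on hXhalf i1 jsh
      intro x hx
      have hxI : x ∈ I := ⟨hx.1, le_trans hx.2 hXhalf2⟩
      have hyI : x + X/2 ∈ I := ⟨by linarith [hx.1], by linarith [hx.2]⟩
      have hk := key x hxI (x + X/2) hyI (by linarith)
      have hys : x + X/2 - x = X/2 := by ring
      rw [hys] at hk
      have h1 : u x ^ 2 / Real.cosh x ^ 2 ≤ u x ^ 2 := by
        apply div_le_self (sq_nonneg _)
        have := Real.one_le_cosh x
        nlinarith
      have h2 : u x ^ 2 ≤ u (x + X/2) ^ 2 / c := by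
        rw [le_div_iff₀ hcpos]
        exact hk
      linarith
    have shift : (∫ x in (0:ℝ)..(X/2), u (x + X/2) ^ 2 / c)
        = (∫ x in (X/2)..X, u x ^ 2) / c := by
      rw [intervalIntegral.integral_div]
      congr 1
      have := intervalIntegral.integral_comp_add_right (a := (0:ℝ)) (b := X/2)
        (fun x => u x ^ 2) (X/2)
      rw [this]
      norm_num
    exact step.trans shift.le
  -- part 2: on [X/2, X]
  have part2 : (∫ x in (X/2)..X, u x ^ 2 / Real.cosh x ^ 2)
      ≤ (∫ x in (X/2)..X, u x ^ 2) / c := by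
    rw [← intervalIntegral.integral_div]
    apply intervalIntegral.integral_mono_on hXhalf2 i2 (j2.div_const c)
    intro x hx
    have hcx : c ≤ Real.cosh x ^ 2 := by
      have h1 : Real.cosh (X/2) ≤ Real.cosh x := by
        rw [Real.cosh_le_cosh, abs_of_nonneg hXhalf, abs_of_nonneg (le_trans hXhalf hx.1)]
        exact hx.1
      nlinarith
    exact div_le_div_of_nonneg_left (sq_nonneg _) hcpos hcx
  -- combine
  have split : (∫ x in (0:ℝ)..(X/2), u x ^ 2 / Real.cosh x ^ 2)
      + (∫ x in (X/2)..X, u x ^ 2 / Real.cosh x ^ 2)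
      = ∫ x in (0:ℝ)..X, u x ^ 2 / Real.cosh x ^ 2 :=
    intervalIntegral.integral_add_adjacent_intervals i1 i2
  have splitw : (∫ x in (0:ℝ)..(X/2), u x ^ 2) + (∫ x in (X/2)..X, u x ^ 2)
      = ∫ x in (0:ℝ)..X, u x ^ 2 :=
    intervalIntegral.integral_add_adjacent_intervals j1 j2
  have wnn : 0 ≤ ∫ x in (0:ℝ)..(X/2), u x ^ 2 :=
    intervalIntegral.integral_nonneg hXhalf (fun x _ => sq_nonneg _)
  have wnn2 : 0 ≤ ∫ x in (X/2)..X, u x ^ 2 :=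
    intervalIntegral.integral_nonneg hXhalf2 (fun x _ => sq_nonneg _)
  rw [← split]
  have hle : (∫ x in (X/2)..X, u x ^ 2) ≤ ∫ x in (0:ℝ)..X, u x ^ 2 := by
    rw [← splitw]; linarith
  calc (∫ x in (0:ℝ)..(X/2), u x ^ 2 / Real.cosh x ^ 2)
        + (∫ x in (X/2)..X, u x ^ 2 / Real.cosh x ^ 2)
      ≤ (∫ x in (X/2)..X, u x ^ 2) / c + (∫ x in (X/2)..X, u x ^ 2) / c :=
        add_le_add part1 part2
    _ = (2/c) * (∫ x in (X/2)..X, u x ^ 2) := by ring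
    _ ≤ (2/c) * ∫ x in (0:ℝ)..X, u x ^ 2 :=
        mul_le_mul_of_nonneg_left hle (by positivity)
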